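/- arXiv:2411.15663 — 2 statements merged into one kernel-verified Lean document; each statement's English description precedes it below -/
import Mathlib

section
/- Let n be an odd positive integer and let D_{2n} = ⟨r, s | r^n = s^2 = 1, srs = r^{-1}⟩ be the dihedral group of order 2n. With C_2 = ⟨s⟩ and C_n = ⟨r⟩, there is an isomorphism of ℚ[D_{2n}]-modules ℚ[D_{2n}/1] ⊕ ℚ[D_{2n}/D_{2n}]^{⊕2} ≅ ℚ[D_{2n}/C_n] ⊕ ℚ[D_{2n}/C_2]^{⊕2}, where ℚ[G/H] denotes the permutation module on the coset space G/H. -/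
open DihedralGroup

namespace DBR

variable {n : ℕ}

/-- sign character of the dihedral group, with values in ℚ. -/
def sgn : DihedralGroup n → ℚ
  | r _ => 1
  | sr _ => -1

@[simp] lemma sgn_r (i : ZMod n) : sgn (r i) = 1 := rfl
@[simp] lemma sgn_sr (i : ZMod n) : sgn (sr i) = -1 := rfl

lemma sgn_mul (a b : DihedralGroup n) : sgn (a * b) = sgn a * sgn b := by
  cases a <;> cases b <;> simp [sgn]

@[simp] lemma r_inv (i : ZMod n) : (r i)⁻¹ = r (-i) := rfl
@[simp] lemma sr_inv (i : ZMod n) : (sr i)⁻¹ = sr i := rfl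

lemma sr_zpow (k : ℤ) : (sr 0 : DihedralGroup n) ^ k = if Even k then 1 else sr 0 := by
  have h2 : (sr 0 : DihedralGroup n) ^ (2:ℤ) = 1 := by
    rw [show (2:ℤ) = 1 + 1 by norm_num, zpow_add, zpow_one]
    rw [sr_mul_sr, sub_self, ← one_def]
  rcases Int.even_or_odd k with ⟨m, hm⟩ | ⟨m, hm⟩
  · subst hm
    rw [if_pos ⟨m, rfl⟩, show m + m = 2 * m by ring, zpow_mul, h2, one_zpow]
  · subst hm
    rw [if_neg (by simp [Int.even_add_one, Int.even_mul])]
    rw [zpow_add, zpow_mul, h2, one_zpow, one_mul, zpow_one]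

lemma mem_C2 (x : DihedralGroup n) :
    x ∈ Subgroup.zpowers (sr 0 : DihedralGroup n) ↔ x = 1 ∨ x = sr 0 := by
  constructor
  · rintro ⟨k, rfl⟩
    by_cases h : Even k
    · left; show (sr 0 : DihedralGroup n) ^ k = 1; rw [sr_zpow, if_pos h]
    · right; show (sr 0 : DihedralGroup n) ^ k = sr 0; rw [sr_zpow, if_neg h]
  · rintro (rfl | rfl)
    · exact one_mem _
    · exact Subgroup.mem_zpowers _

lemma r_one_zpow (k : ℤ) : (r 1 : DihedralGroup n) ^ k = r (k : ZMod n) := by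
  cases k with
  | ofNat m =>
      rw [Int.ofNat_eq_coe, zpow_natCast, r_one_pow]
      norm_cast
  | negSucc m =>
      rw [zpow_negSucc, r_one_pow, r_inv, Int.cast_negSucc]

lemma mem_Cn [NeZero n] (x : DihedralGroup n) :
    x ∈ Subgroup.zpowers (r 1 : DihedralGroup n) ↔ ∃ j, x = r j := by
  constructor
  · rintro ⟨k, rfl⟩
    refine ⟨(k : ZMod n), ?_⟩
    show (r 1 : DihedralGroup n) ^ k = r (k : ZMod n)
    exact r_one_zpow k
  · rintro ⟨j, rfl⟩
    refine ⟨(j.val : ℤ), ?_⟩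
    show (r 1 : DihedralGroup n) ^ (j.val : ℤ) = r j
    rw [r_one_zpow]
    norm_cast
    rw [ZMod.natCast_val, ZMod.cast_id]


abbrev Cn (n : ℕ) : Subgroup (DihedralGroup n) := Subgroup.zpowers (r 1)
abbrev C2 (n : ℕ) : Subgroup (DihedralGroup n) := Subgroup.zpowers (sr 0)

lemma q2_r_eq_r (i a : ZMod n) :
    (QuotientGroup.mk (r i) : DihedralGroup n ⧸ C2 n) = QuotientGroup.mk (r a) ↔ i = a := by
  rw [QuotientGroup.eq]
  simp only [r_inv, r_mul_r, mem_C2, one_def]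
  constructor
  · rintro (h | h)
    · have := (r.injEq _ _).mp h; linear_combination -this
    · exact absurd h (by simp)
  · rintro rfl; left; congr 1; ring

lemma q2_sr_eq_r (i a : ZMod n) :
    (QuotientGroup.mk (sr i) : DihedralGroup n ⧸ C2 n) = QuotientGroup.mk (r a) ↔ i = -a := by
  rw [QuotientGroup.eq]
  simp only [sr_inv, sr_mul_r, mem_C2, one_def]
  constructor
  · rintro (h | h)
    · exact absurd h (fun h' => by cases h')
    · have := (sr.injEq _ _).mp h; linear_combination this
  · rintro rfl; right; congr 1; ring

lemma q2_surj (c : DihedralGroup n ⧸ C2 n) : ∃ a, c = QuotientGroup.mk (r a) := by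
  induction c using QuotientGroup.induction_on with
  | H g =>
    cases g with
    | r i => exact ⟨i, rfl⟩
    | sr i => exact ⟨-i, ((q2_sr_eq_r i (-i)).mpr (by ring)).symm ▸ rfl⟩

lemma q1_r [NeZero n] (i : ZMod n) :
    (QuotientGroup.mk (r i) : DihedralGroup n ⧸ Cn n) = QuotientGroup.mk 1 := by
  rw [QuotientGroup.eq]
  exact (mem_Cn _).mpr ⟨-i, by simp⟩

lemma q1_sr [NeZero n] (i : ZMod n) :
    (QuotientGroup.mk (sr i) : DihedralGroup n ⧸ Cn n) = QuotientGroup.mk (sr 0) := by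
  rw [QuotientGroup.eq]
  exact (mem_Cn _).mpr ⟨-i, by simp⟩

lemma q1_ne [NeZero n] :
    (QuotientGroup.mk 1 : DihedralGroup n ⧸ Cn n) ≠ QuotientGroup.mk (sr 0) := by
  intro h
  rw [QuotientGroup.eq] at h
  obtain ⟨j, hj⟩ := (mem_Cn _).mp h
  simp at hj

/-- The sign character on the quotient by the rotation subgroup. -/
noncomputable def chi (d : DihedralGroup n ⧸ Cn n) : ℚ :=
  if d = QuotientGroup.mk 1 then 1 else -1

@[simp] lemma chi_r [NeZero n] (i : ZMod n) :
    chi (QuotientGroup.mk (r i) : DihedralGroup n ⧸ Cn n) = 1 := by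
  rw [chi, if_pos (q1_r i)]

@[simp] lemma chi_sr [NeZero n] (i : ZMod n) :
    chi (QuotientGroup.mk (sr i) : DihedralGroup n ⧸ Cn n) = -1 := by
  rw [chi, if_neg]
  rw [q1_sr]
  exact fun h => q1_ne h.symm

lemma smul_mk {G : Type*} [Group G] (H : Subgroup G) (g h : G) :
    g • (QuotientGroup.mk h : G ⧸ H) = QuotientGroup.mk (g * h) := by
  rw [MulAction.Quotient.smul_mk, smul_eq_mul]

/-- constructor equivalence -/
def dihedralSum (n : ℕ) : ZMod n ⊕ ZMod n ≃ DihedralGroup n where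
  toFun := Sum.elim r sr
  invFun g := match g with | r j => Sum.inl j | sr j => Sum.inr j
  left_inv := by rintro (x | x) <;> rfl
  right_inv := by rintro (x | x) <;> rfl

lemma sum_split [NeZero n] (F : DihedralGroup n → ℚ) :
    ∑ g : DihedralGroup n, F g = ∑ i : ZMod n, F (r i) + ∑ i : ZMod n, F (sr i) := by
  rw [← Equiv.sum_comp (dihedralSum n) F, Fintype.sum_sum_type]
  rfl


abbrev Src (n : ℕ) := (DihedralGroup n ⧸ (⊥ : Subgroup (DihedralGroup n))) ⊕
    ((DihedralGroup n ⧸ (⊤ : Subgroup (DihedralGroup n))) ⊕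
     (DihedralGroup n ⧸ (⊤ : Subgroup (DihedralGroup n))))

abbrev Tgt (n : ℕ) := (DihedralGroup n ⧸ Cn n) ⊕
    ((DihedralGroup n ⧸ C2 n) ⊕ (DihedralGroup n ⧸ C2 n))

noncomputable section
open scoped Classical

/-- the coefficient of `v` at the group element `g`. -/
def Fv (v : Src n → ℚ) (g : DihedralGroup n) : ℚ := v (Sum.inl (QuotientGroup.mk g))

def Xc [NeZero n] (v : Src n → ℚ) (d : DihedralGroup n ⧸ Cn n) : ℚ :=
  (∑ g : DihedralGroup n, Fv v g *
      (if (QuotientGroup.mk g : DihedralGroup n ⧸ Cn n) = d then 1 else 0))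
    + (n : ℚ)⁻¹ * (∑ g : DihedralGroup n, Fv v g * sgn g) * chi d
    + v (Sum.inr (Sum.inl (QuotientGroup.mk 1)))

def Yc [NeZero n] (v : Src n → ℚ) (c : DihedralGroup n ⧸ C2 n) : ℚ :=
  ∑ g : DihedralGroup n, Fv v g *
    (if (QuotientGroup.mk g : DihedralGroup n ⧸ C2 n) = c then 1 else 0)

def Zc [NeZero n] (v : Src n → ℚ) (c : DihedralGroup n ⧸ C2 n) : ℚ :=
  (∑ g : DihedralGroup n, Fv v g * sgn g *
      ((if (QuotientGroup.mk g : DihedralGroup n ⧸ C2 n) = (r (-1) : DihedralGroup n) • c then 1 else 0) -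
       (if (QuotientGroup.mk g : DihedralGroup n ⧸ C2 n) = (r 1 : DihedralGroup n) • c then 1 else 0)))
    + v (Sum.inr (Sum.inr (QuotientGroup.mk 1)))

def Emap [NeZero n] : (Src n → ℚ) →ₗ[ℚ] (Tgt n → ℚ) where
  toFun v := Sum.elim (Xc v) (Sum.elim (Yc v) (Zc v))
  map_add' u v := by
    funext p
    rcases p with d | c | c <;>
      simp only [Sum.elim_inl, Sum.elim_inr, Xc, Yc, Zc, Fv, Pi.add_apply, add_mul,
        Finset.sum_add_distrib, mul_add, add_mul] <;> ring
  map_smul' a v := by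
    funext p
    rcases p with d | c | c <;>
      simp only [Sum.elim_inl, Sum.elim_inr, Xc, Yc, Zc, Fv, Pi.smul_apply, smul_eq_mul,
        RingHom.id_apply, mul_assoc, ← Finset.mul_sum] <;> ring


@[simp] lemma sgn_inv (a : DihedralGroup n) : sgn a⁻¹ = sgn a := by
  cases a <;> rfl

lemma mk_mul_eq_iff {G : Type*} [Group G] (H : Subgroup G) (g₀ g : G) (d : G ⧸ H) :
    (QuotientGroup.mk (g₀ * g) : G ⧸ H) = d ↔ QuotientGroup.mk g = g₀⁻¹ • d := by
  rw [← smul_mk H g₀ g]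
  exact eq_inv_smul_iff.symm

lemma chi_smul [NeZero n] (a : DihedralGroup n) (d : DihedralGroup n ⧸ Cn n) :
    chi (a • d) = sgn a * chi d := by
  induction d using QuotientGroup.induction_on with
  | H h => cases a <;> cases h <;> simp [smul_mk]

lemma top_smul (g : DihedralGroup n)
    (t : DihedralGroup n ⧸ (⊤ : Subgroup (DihedralGroup n))) : g • t = t := by
  haveI := QuotientGroup.subsingleton_quotient_top (G := DihedralGroup n)
  exact Subsingleton.elim _ _

lemma Fv_smul (g₀ : DihedralGroup n) (v : Src n → ℚ) (g : DihedralGroup n) :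
    Fv (fun q => v (g₀⁻¹ • q)) g = Fv v (g₀⁻¹ * g) := by
  simp [Fv, Sum.smul_inl, smul_mk]

lemma hre [NeZero n] (g₀ : DihedralGroup n) (v : Src n → ℚ) (B : DihedralGroup n → ℚ) :
    ∑ g : DihedralGroup n, Fv v (g₀⁻¹ * g) * B g =
      ∑ g : DihedralGroup n, Fv v g * B (g₀ * g) := by
  refine Fintype.sum_equiv (Equiv.mulLeft g₀⁻¹) _ _ (fun g => ?_)
  simp [mul_inv_cancel_left]

lemma smul_smul_r {α : Type*} [MulAction (DihedralGroup n) α] (i j : ZMod n) (x : α) :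
    (r i : DihedralGroup n) • ((r j : DihedralGroup n) • x) =
      (r j : DihedralGroup n) • ((r i : DihedralGroup n) • x) := by
  rw [← mul_smul, ← mul_smul, r_mul_r, r_mul_r, add_comm]

lemma sr_smul_r {α : Type*} [MulAction (DihedralGroup n) α] (k j : ZMod n) (x : α) :
    (sr k : DihedralGroup n) • ((r j : DihedralGroup n) • x) =
      (r (-j) : DihedralGroup n) • ((sr k : DihedralGroup n) • x) := by
  rw [← mul_smul, ← mul_smul, sr_mul_r, r_mul_sr]
  congr 1
  ring

lemma Emap_equiv [NeZero n] (g₀ : DihedralGroup n) (v : Src n → ℚ) :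
    Emap (n := n) (fun q => v (g₀⁻¹ • q)) = fun p => Emap (n := n) v (g₀⁻¹ • p) := by
  funext p
  rcases p with d | c | c
  · -- X component
    simp only [Emap, LinearMap.coe_mk, AddHom.coe_mk, Sum.smul_inl, Sum.elim_inl]
    rw [Xc, Xc]
    simp only [Fv_smul, Sum.smul_inr, Sum.smul_inl, top_smul, hre, mk_mul_eq_iff, sgn_mul,
      chi_smul, sgn_inv]
    have hmid : ∑ g : DihedralGroup n, Fv v g * (sgn g₀ * sgn g)
        = sgn g₀ * ∑ g : DihedralGroup n, Fv v g * sgn g := by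
      rw [Finset.mul_sum]
      exact Finset.sum_congr rfl (fun g _ => by ring)
    rw [hmid]
    ring
  · -- Y component
    simp only [Emap, LinearMap.coe_mk, AddHom.coe_mk, Sum.smul_inr, Sum.smul_inl, Sum.elim_inr,
      Sum.elim_inl]
    rw [Yc, Yc]
    simp only [Fv_smul, hre, mk_mul_eq_iff]
  · -- Z component
    simp only [Emap, LinearMap.coe_mk, AddHom.coe_mk, Sum.smul_inr, Sum.elim_inr]
    rw [Zc, Zc]
    simp only [Fv_smul, Sum.smul_inr, Sum.smul_inl, top_smul, mul_assoc, hre, mk_mul_eq_iff,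
      sgn_mul]
    congr 1
    cases g₀ with
    | r k =>
        refine Finset.sum_congr rfl (fun g _ => ?_)
        rw [r_inv, smul_smul_r (-k) (-1), smul_smul_r (-k) 1]
        simp
    | sr k =>
        have h1 : (sr k : DihedralGroup n)⁻¹ • ((r (-1) : DihedralGroup n) • c)
            = (r 1 : DihedralGroup n) • ((sr k : DihedralGroup n)⁻¹ • c) := by
          rw [sr_inv, sr_smul_r k (-1), neg_neg]
        have h2 : (sr k : DihedralGroup n)⁻¹ • ((r 1 : DihedralGroup n) • c)
            = (r (-1) : DihedralGroup n) • ((sr k : DihedralGroup n)⁻¹ • c) := by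
          rw [sr_inv, sr_smul_r k 1]
        rw [h1, h2]
        refine Finset.sum_congr rfl (fun g _ => ?_)
        simp only [sgn_sr]
        ring


def wsum [NeZero n] (F : DihedralGroup n → ℚ) (c : DihedralGroup n ⧸ C2 n) : ℚ :=
  ∑ g : DihedralGroup n, F g * sgn g *
    (if (QuotientGroup.mk g : DihedralGroup n ⧸ C2 n) = c then 1 else 0)

lemma wsum_mk_r [NeZero n] (F : DihedralGroup n → ℚ) (a : ZMod n) :
    wsum F (QuotientGroup.mk (r a)) = F (r a) - F (sr (-a)) := by
  rw [wsum, sum_split]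
  simp [q2_r_eq_r, q2_sr_eq_r, mul_ite, Finset.sum_ite_eq']
  ring

lemma two_mul_surj (hodd : Odd n) (b : ZMod n) : ∃ k : ℕ, (2 * k : ZMod n) = b := by
  obtain ⟨t, rfl⟩ := hodd
  refine ⟨(t + 1) * b.val, ?_⟩
  have h1 : ((2 * (t + 1) : ℕ) : ZMod (2 * t + 1)) = 1 := by
    have : (2 * (t + 1) : ℕ) = (2 * t + 1) + 1 := by ring
    rw [this, Nat.cast_add, Nat.cast_one, ZMod.natCast_self, zero_add]
  calc (2 * ((t + 1) * b.val : ℕ) : ZMod (2 * t + 1))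
      = ((2 * (t + 1) : ℕ) : ZMod (2 * t + 1)) * (b.val : ZMod (2 * t + 1)) := by push_cast; ring
    _ = b := by rw [h1, one_mul, ZMod.natCast_val, ZMod.cast_id]

lemma Emap_inj [NeZero n] (hodd : Odd n) : Function.Injective (Emap (n := n)) := by
  refine (injective_iff_map_eq_zero (Emap (n := n))).mpr (fun v hv => ?_)
  haveI := QuotientGroup.subsingleton_quotient_top (G := DihedralGroup n)
  haveI : Fintype (DihedralGroup n ⧸ C2 n) := Fintype.ofFinite _
  have hX : ∀ d, Xc v d = 0 := fun d => congrFun hv (Sum.inl d)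
  have hY : ∀ c, Yc v c = 0 := fun c => congrFun hv (Sum.inr (Sum.inl c))
  have hZ : ∀ c, Zc v c = 0 := fun c => congrFun hv (Sum.inr (Sum.inr c))
  set F : DihedralGroup n → ℚ := Fv v with hFdef
  set μ : ℚ := v (Sum.inr (Sum.inl (QuotientGroup.mk 1))) with hμdef
  set ν : ℚ := v (Sum.inr (Sum.inr (QuotientGroup.mk 1))) with hνdef
  -- the Y equations
  have hYa : ∀ a : ZMod n, F (r a) + F (sr (-a)) = 0 := by
    intro a
    have h := hY (QuotientGroup.mk (r a))
    rw [Yc, sum_split] at h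
    simpa [q2_r_eq_r, q2_sr_eq_r, mul_ite, Finset.sum_ite_eq'] using h
  -- the Z equations
  have hZc : ∀ c, wsum F ((r (-1) : DihedralGroup n) • c)
      - wsum F ((r 1 : DihedralGroup n) • c) + ν = 0 := by
    intro c
    have h := hZ c
    rw [Zc] at h
    simp only [mul_sub, Finset.sum_sub_distrib] at h
    exact h
  -- sum the Z equations over all cosets: ν = 0
  have hν : ν = 0 := by
    have hsum : ∑ c : DihedralGroup n ⧸ C2 n,
        (wsum F ((r (-1) : DihedralGroup n) • c) - wsum F ((r 1 : DihedralGroup n) • c) + ν)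
        = 0 := by
      rw [Finset.sum_congr rfl (fun c _ => hZc c)]
      simp
    have h1 : ∑ c : DihedralGroup n ⧸ C2 n, wsum F ((r (-1) : DihedralGroup n) • c)
        = ∑ c : DihedralGroup n ⧸ C2 n, wsum F c :=
      Equiv.sum_comp (MulAction.toPerm (r (-1) : DihedralGroup n)) (wsum F)
    have h2 : ∑ c : DihedralGroup n ⧸ C2 n, wsum F ((r 1 : DihedralGroup n) • c)
        = ∑ c : DihedralGroup n ⧸ C2 n, wsum F c :=
      Equiv.sum_comp (MulAction.toPerm (r 1 : DihedralGroup n)) (wsum F)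
    rw [Finset.sum_add_distrib, Finset.sum_sub_distrib, h1, h2, sub_self, zero_add,
      Finset.sum_const, Finset.card_univ, nsmul_eq_mul] at hsum
    have hcard : (0 : ℚ) < (Fintype.card (DihedralGroup n ⧸ C2 n) : ℚ) := by
      exact_mod_cast Fintype.card_pos
    have := mul_eq_zero.mp hsum
    rcases this with h | h
    · exact absurd h hcard.ne'
    · exact h
  -- the step-two relation in coordinates
  have hW2 : ∀ a : ZMod n, wsum F (QuotientGroup.mk (r (a + 2)))
      = wsum F (QuotientGroup.mk (r a)) := by
    intro a
    have h := hZc (QuotientGroup.mk (r (a + 1)))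
    rw [hν, add_zero, sub_eq_zero, smul_mk, smul_mk, r_mul_r, r_mul_r] at h
    have e1 : (-1 : ZMod n) + (a + 1) = a := by ring
    have e2 : (1 : ZMod n) + (a + 1) = a + 2 := by ring
    rw [e1, e2] at h
    exact h.symm
  have hWconst : ∀ a : ZMod n, wsum F (QuotientGroup.mk (r a))
      = wsum F (QuotientGroup.mk (r 0)) := by
    have key : ∀ k : ℕ, ∀ a : ZMod n, wsum F (QuotientGroup.mk (r (a + 2 * k)))
        = wsum F (QuotientGroup.mk (r a)) := by
      intro k
      induction k with
      | zero => intro a; norm_num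
      | succ m ih =>
          intro a
          have : (a + 2 * (m + 1 : ℕ) : ZMod n) = (a + 2 * (m : ℕ)) + 2 := by push_cast; ring
          rw [this, hW2, ih]
    intro a
    obtain ⟨k, hk⟩ := two_mul_surj hodd a
    have := key k 0
    rw [zero_add, hk] at this
    exact this
  -- pin down F
  set C : ℚ := wsum F (QuotientGroup.mk (r 0)) with hCdef
  have hFr : ∀ a : ZMod n, F (r a) = C / 2 := by
    intro a
    have h1 := hYa a
    have h2 : F (r a) - F (sr (-a)) = C := by rw [← wsum_mk_r F a, hWconst a]
    linarith
  have hFsr : ∀ b : ZMod n, F (sr b) = -(C / 2) := by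
    intro b
    have h1 := hYa (-b)
    rw [neg_neg, hFr (-b)] at h1
    linarith
  -- the X equations
  have hnQ : (0 : ℚ) < (n : ℚ) := by
    exact_mod_cast Nat.pos_of_ne_zero (NeZero.ne n)
  have hSsgn : ∑ g : DihedralGroup n, F g * sgn g = n * C := by
    rw [sum_split]
    simp only [sgn_r, sgn_sr, mul_one, hFr, hFsr]
    rw [Finset.sum_const, Finset.sum_const, Finset.card_univ, ZMod.card, nsmul_eq_mul]
    ring
  have hX1 : (n : ℚ) * (C / 2) + (n : ℚ)⁻¹ * ((n : ℚ) * C) + μ = 0 := by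
    have h := hX (QuotientGroup.mk 1)
    rw [Xc, sum_split] at h
    rw [← hFdef, hSsgn] at h
    have hne : (QuotientGroup.mk (sr 0) : DihedralGroup n ⧸ Cn n) ≠ QuotientGroup.mk 1 :=
      fun hh => q1_ne hh.symm
    have hchi : chi (QuotientGroup.mk 1 : DihedralGroup n ⧸ Cn n) = 1 := by
      rw [show (1 : DihedralGroup n) = r 0 from one_def, chi_r]
    simp only [q1_r, q1_sr, hne, hchi, if_true, if_false, eq_self_iff_true, mul_one, mul_zero,
      Finset.sum_const_zero, add_zero, hFr, Finset.sum_const, Finset.card_univ, ZMod.card,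
      nsmul_eq_mul] at h
    exact h
  have hX2 : -((n : ℚ) * (C / 2)) + (n : ℚ)⁻¹ * ((n : ℚ) * C) * (-1) + μ = 0 := by
    have h := hX (QuotientGroup.mk (sr 0))
    rw [Xc, sum_split] at h
    rw [← hFdef, hSsgn] at h
    have hne : (QuotientGroup.mk 1 : DihedralGroup n ⧸ Cn n) ≠ QuotientGroup.mk (sr 0) := q1_ne
    have hchi : chi (QuotientGroup.mk (sr 0) : DihedralGroup n ⧸ Cn n) = -1 := chi_sr 0
    simp only [q1_sr, q1_r, hne, hchi, if_true, if_false, eq_self_iff_true, mul_one, mul_zero,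
      Finset.sum_const_zero, zero_add, hFsr, Finset.sum_const, Finset.card_univ, ZMod.card,
      nsmul_eq_mul] at h
    linarith [h]
  have hC : C = 0 := by
    have hinv : (n : ℚ)⁻¹ * ((n : ℚ) * C) = C := by field_simp
    rw [hinv] at hX1 hX2
    nlinarith [hX1, hX2, hnQ]
  have hμ : μ = 0 := by
    rw [hC] at hX1
    simpa using hX1
  -- conclude
  funext q
  rcases q with h | t | t
  · show v (Sum.inl h) = 0
    induction h using QuotientGroup.induction_on with
    | H g =>
        have : F g = 0 := by
          cases g with
          | r i => rw [hFr, hC]; norm_num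
          | sr i => rw [hFsr, hC]; norm_num
        exact this
  · show v (Sum.inr (Sum.inl t)) = 0
    rw [Subsingleton.elim t (QuotientGroup.mk 1)]
    exact hμ
  · show v (Sum.inr (Sum.inr t)) = 0
    rw [Subsingleton.elim t (QuotientGroup.mk 1)]
    exact hν


lemma card_quot_Cn [NeZero n] : Nat.card (DihedralGroup n ⧸ Cn n) = 2 := by
  have h := Subgroup.card_eq_card_quotient_mul_card_subgroup (Cn n)
  rw [Nat.card_zpowers, orderOf_r_one, Nat.card_eq_fintype_card, DihedralGroup.card] at h
  have hn : 0 < n := Nat.pos_of_ne_zero (NeZero.ne n)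
  exact (Nat.eq_of_mul_eq_mul_right hn h.symm)

lemma card_quot_C2 [NeZero n] : Nat.card (DihedralGroup n ⧸ C2 n) = n := by
  have h := Subgroup.card_eq_card_quotient_mul_card_subgroup (C2 n)
  rw [Nat.card_zpowers, orderOf_sr, Nat.card_eq_fintype_card, DihedralGroup.card] at h
  have : 2 * n = Nat.card (DihedralGroup n ⧸ C2 n) * 2 := h
  omega

lemma card_quot_bot [NeZero n] :
    Nat.card (DihedralGroup n ⧸ (⊥ : Subgroup (DihedralGroup n))) = 2 * n := by
  have h := Subgroup.card_eq_card_quotient_mul_card_subgroup (⊥ : Subgroup (DihedralGroup n))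
  rw [Subgroup.card_bot, Nat.card_eq_fintype_card, DihedralGroup.card, mul_one] at h
  exact h.symm

lemma card_quot_top [NeZero n] :
    Nat.card (DihedralGroup n ⧸ (⊤ : Subgroup (DihedralGroup n))) = 1 := by
  have h := Subgroup.card_eq_card_quotient_mul_card_subgroup (⊤ : Subgroup (DihedralGroup n))
  rw [Subgroup.card_top, Nat.card_eq_fintype_card, DihedralGroup.card] at h
  have h2n : (2 * n) ≠ 0 := by
    have := NeZero.ne n; omega
  have hk := h.symm
  have hn := NeZero.ne n
  exact Nat.eq_of_mul_eq_mul_right (by omega) (hk.trans (one_mul (2 * n)).symm)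

lemma rank_eq [NeZero n] :
    Module.finrank ℚ (Src n → ℚ) = Module.finrank ℚ (Tgt n → ℚ) := by
  haveI : Fintype (Src n) := Fintype.ofFinite _
  haveI : Fintype (Tgt n) := Fintype.ofFinite _
  rw [Module.finrank_pi, Module.finrank_pi, ← Nat.card_eq_fintype_card,
    ← Nat.card_eq_fintype_card, Nat.card_sum, Nat.card_sum, Nat.card_sum, Nat.card_sum,
    card_quot_Cn, card_quot_C2, card_quot_bot, card_quot_top]
  ring

end

end DBR

/-- For odd `n`, with `G = D_{2n}`, `C₂ = ⟨s⟩`, `Cₙ = ⟨r⟩`, the permutation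
modules satisfy `ℚ[G/1] ⊕ ℚ[G/G]^{⊕2} ≅ ℚ[G/Cₙ] ⊕ ℚ[G/C₂]^{⊕2}` as `ℚ[G]`-modules, i.e.
there is a `ℚ`-linear equivalence between the permutation modules on the disjoint unions of
coset spaces, commuting with the `G`-actions. -/
theorem dihedral_brauer_relation_odd (n : ℕ) (hn : 0 < n) (hodd : Odd n) :
    ∃ e : ((DihedralGroup n ⧸ (⊥ : Subgroup (DihedralGroup n))) ⊕
            ((DihedralGroup n ⧸ (⊤ : Subgroup (DihedralGroup n))) ⊕
             (DihedralGroup n ⧸ (⊤ : Subgroup (DihedralGroup n)))) →₀ ℚ) ≃ₗ[ℚ]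
          ((DihedralGroup n ⧸ Subgroup.zpowers (r 1 : DihedralGroup n)) ⊕
            ((DihedralGroup n ⧸ Subgroup.zpowers (sr 0 : DihedralGroup n)) ⊕
             (DihedralGroup n ⧸ Subgroup.zpowers (sr 0 : DihedralGroup n))) →₀ ℚ),
      ∀ (g : DihedralGroup n) (v),
        e (Finsupp.lmapDomain ℚ ℚ (fun x => g • x) v) =
          Finsupp.lmapDomain ℚ ℚ (fun x => g • x) (e v) := by
  haveI : NeZero n := ⟨hn.ne'⟩
  refine ⟨(Finsupp.linearEquivFunOnFinite ℚ ℚ (DBR.Src n)).trans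
    ((((DBR.Emap (n := n)).linearEquivOfInjective (DBR.Emap_inj hodd) DBR.rank_eq).trans
      (Finsupp.linearEquivFunOnFinite ℚ ℚ (DBR.Tgt n)).symm)), ?_⟩
  intro g v
  simp only [LinearEquiv.trans_apply]
  rw [LinearEquiv.symm_apply_eq]
  have h1 : (Finsupp.linearEquivFunOnFinite ℚ ℚ (DBR.Src n))
      (Finsupp.lmapDomain ℚ ℚ (fun x => g • x) v)
      = fun q => v (g⁻¹ • q) :=
    funext fun q => by
      show (Finsupp.mapDomain (fun x => g • x) v) q = v (g⁻¹ • q)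
      have := Finsupp.mapDomain_apply (MulAction.injective g) v (g⁻¹ • q)
      simp only [smul_inv_smul] at this
      exact this
  have h2 : ∀ u : DBR.Tgt n → ℚ,
      (Finsupp.linearEquivFunOnFinite ℚ ℚ (DBR.Tgt n))
        (Finsupp.lmapDomain ℚ ℚ (fun x => g • x)
          ((Finsupp.linearEquivFunOnFinite ℚ ℚ (DBR.Tgt n)).symm u))
      = fun p => u (g⁻¹ • p) := by
    intro u
    funext p
    show (Finsupp.mapDomain (fun x => g • x)
      ((Finsupp.linearEquivFunOnFinite ℚ ℚ (DBR.Tgt n)).symm u)) p = u (g⁻¹ • p)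
    have := Finsupp.mapDomain_apply (MulAction.injective g)
      ((Finsupp.linearEquivFunOnFinite ℚ ℚ (DBR.Tgt n)).symm u) (g⁻¹ • p)
    simp only [smul_inv_smul] at this
    rw [this]
    exact congrFun ((Finsupp.linearEquivFunOnFinite ℚ ℚ (DBR.Tgt n)).apply_symm_apply u) _
  rw [h1, h2]
  have h3 : (Finsupp.linearEquivFunOnFinite ℚ ℚ (DBR.Src n)) v = ⇑v := rfl
  simp only [LinearMap.linearEquivOfInjective_apply, h3]
  exact DBR.Emap_equiv g ⇑v
end

section
/- Let n be an even positive integer and D_{2n} = ⟨r, s | r^n = s^2 = 1, srs = r^{-1}⟩. Set C_2 = ⟨s⟩, C_n = ⟨r⟩, D_n = ⟨r^2, s⟩ and D_n' = ⟨r^2, sr⟩. Then there is an isomorphism of ℚ[D_{2n}]-modules ℚ[D_{2n}/1] ⊕ ℚ[D_{2n}/D_{2n}]^{⊕2} ⊕ ℚ[D_{2n}/D_n] ≅ ℚ[D_{2n}/C_n] ⊕ ℚ[D_{2n}/C_2]^{⊕2} ⊕ ℚ[D_{2n}/D_n']. -/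
open DihedralGroup

set_option linter.unusedSectionVars false


namespace DBRaux

variable {n : ℕ} [NeZero n]

/-- sign character on ZMod 2 -/
def chi2 (c : ZMod 2) : ℚ := if c = 0 then 1 else -1

lemma zmod2_cases (c : ZMod 2) : c = 0 ∨ c = 1 := by revert c; decide

lemma chi2_add (c d : ZMod 2) : chi2 (c + d) = chi2 c * chi2 d := by
  rcases zmod2_cases c with hc | hc <;> rcases zmod2_cases d with hd | hd <;>
    subst hc <;> subst hd <;>
    simp only [add_zero, zero_add, chi2] <;> norm_num <;>
    first
      | rfl
      | (norm_num [show ((1:ZMod 2)+1) = 0 from rfl]; try decide)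

lemma chi2_zero : chi2 0 = 1 := rfl
lemma chi2_one : chi2 1 = -1 := rfl
lemma chi2_sq (c : ZMod 2) : chi2 c * chi2 c = 1 := by
  rcases zmod2_cases c with hc | hc <;> subst hc <;> norm_num [chi2]

def pii (h2 : 2 ∣ n) : ZMod n →+* ZMod 2 := ZMod.castHom h2 (ZMod 2)

def chi (h2 : 2 ∣ n) (k : ZMod n) : ℚ := chi2 (pii h2 k)

lemma chi_add (h2 : 2 ∣ n) (k j : ZMod n) : chi h2 (k + j) = chi h2 k * chi h2 j := by
  simp [chi, map_add, chi2_add]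

lemma chi_zero (h2 : 2 ∣ n) : chi h2 0 = 1 := by simp [chi, chi2_zero]

lemma chi_one (h2 : 2 ∣ n) : chi h2 1 = -1 := by simp [chi, chi2_one]

lemma chi_sq (h2 : 2 ∣ n) (k : ZMod n) : chi h2 k * chi h2 k = 1 := chi2_sq _

lemma chi_neg (h2 : 2 ∣ n) (k : ZMod n) : chi h2 (-k) = chi h2 k := by
  have h := chi_add h2 (-k) k
  simp only [neg_add_cancel, chi_zero] at h
  have hs := chi_sq h2 k
  cases' (by rcases (show pii h2 k = 0 ∨ pii h2 k ≠ 0 from em _) with h' | h' <;>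
    simp [chi, chi2, h'] : chi h2 k = 1 ∨ chi h2 k = -1) with h' h' <;>
    rw [h'] at h ⊢ <;> linarith

lemma sum_reindex (σ : ZMod n ≃ ZMod n) (f : ZMod n → ℚ) :
    ∑ i : ZMod n, f (σ i) = ∑ i : ZMod n, f i :=
  Fintype.sum_equiv σ _ _ fun _ => rfl

lemma sum_addLeft (f : ZMod n → ℚ) (j : ZMod n) : ∑ i : ZMod n, f (j + i) = ∑ i, f i :=
  sum_reindex (Equiv.addLeft j) f

lemma sum_subRight (f : ZMod n → ℚ) (j : ZMod n) : ∑ i : ZMod n, f (i - j) = ∑ i, f i :=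
  sum_reindex (Equiv.subRight j) f

lemma sum_negSub (f : ZMod n → ℚ) (j : ZMod n) : ∑ i : ZMod n, f (j - i) = ∑ i, f i := by
  have := sum_reindex ((Equiv.neg (ZMod n)).trans (Equiv.addLeft j)) f
  simpa [sub_eq_add_neg] using this

lemma sum_neg' (f : ZMod n → ℚ) : ∑ i : ZMod n, f (-i) = ∑ i : ZMod n, f i := by
  have := sum_reindex (Equiv.neg (ZMod n)) f
  simpa using this

lemma sum_chi (h2 : 2 ∣ n) : ∑ k : ZMod n, chi h2 k = 0 := by
  have h := sum_addLeft (fun k => chi h2 k) 1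
  have : ∀ k : ZMod n, chi h2 (1 + k) = - chi h2 k := by
    intro k; rw [chi_add, chi_one]; ring
  simp only [this, Finset.sum_neg_distrib] at h
  linarith

lemma sum_chi_sq (h2 : 2 ∣ n) : ∑ k : ZMod n, chi h2 k * chi h2 k = (n : ℚ) := by
  simp [chi_sq, Finset.sum_const, Finset.card_univ, ZMod.card]


/-- degree map -/
def deg : DihedralGroup n → ZMod n
  | DihedralGroup.r i => i
  | DihedralGroup.sr i => i

/-- the type map: 0 on rotations, 1 on reflections -/
def tauf : DihedralGroup n → ZMod 2
  | DihedralGroup.r _ => 0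
  | DihedralGroup.sr _ => 1

@[simp] lemma deg_r (i : ZMod n) : deg (r i) = i := rfl
@[simp] lemma deg_sr (i : ZMod n) : deg (sr i) = i := rfl
@[simp] lemma tauf_r (i : ZMod n) : tauf (r i) = 0 := rfl
@[simp] lemma tauf_sr (i : ZMod n) : tauf (sr i) = 1 := rfl

lemma zmod2_neg (c : ZMod 2) : -c = c := by revert c; decide

/-- the hom `G → ZMod 2` cutting out `⟨r²,s⟩`. -/
def phif (h2 : 2 ∣ n) (g : DihedralGroup n) : ZMod 2 := pii h2 (deg g)

lemma phif_mul (h2 : 2 ∣ n) (a b : DihedralGroup n) :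
    phif h2 (a * b) = phif h2 a + phif h2 b := by
  rcases a with i | i <;> rcases b with j | j <;>
    simp [phif, r_mul_r, r_mul_sr, sr_mul_r, sr_mul_sr, map_add, map_sub, sub_eq_add_neg,
      zmod2_neg, add_comm]

lemma tauf_mul (a b : DihedralGroup n) :
    tauf (a * b) = tauf a + tauf b := by
  rcases a with i | i <;> rcases b with j | j <;>
    simp [r_mul_r, r_mul_sr, sr_mul_r, sr_mul_sr] <;> decide

/-- the hom cutting out `⟨r², sr⟩`. -/
def phif' (h2 : 2 ∣ n) (g : DihedralGroup n) : ZMod 2 := phif h2 g + tauf g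

lemma phif'_mul (h2 : 2 ∣ n) (a b : DihedralGroup n) :
    phif' h2 (a * b) = phif' h2 a + phif' h2 b := by
  simp [phif', phif_mul, tauf_mul]; ring

@[simp] lemma phif_r (h2 : 2 ∣ n) (i : ZMod n) : phif h2 (r i) = pii h2 i := rfl
@[simp] lemma phif_sr (h2 : 2 ∣ n) (i : ZMod n) : phif h2 (sr i) = pii h2 i := rfl
@[simp] lemma phif'_r (h2 : 2 ∣ n) (i : ZMod n) : phif' h2 (r i) = pii h2 i := by
  simp [phif']
@[simp] lemma phif'_sr (h2 : 2 ∣ n) (i : ZMod n) : phif' h2 (sr i) = pii h2 i + 1 := rfl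

lemma r_two_pow (m : ℕ) : (r 2 : DihedralGroup n) ^ m = r (2 * m : ℕ) := by
  induction m with
  | zero => simp
  | succ k ih =>
    rw [pow_succ, ih, r_mul_r]
    congr 1
    push_cast
    ring

lemma pii_eq_zero_iff (h2 : 2 ∣ n) (i : ZMod n) : pii h2 i = 0 ↔ 2 ∣ i.val := by
  rw [pii, ZMod.castHom_apply, ← ZMod.natCast_val, ZMod.natCast_eq_zero_iff]

lemma r_mem_closure (h2 : 2 ∣ n) (j : ZMod n) {i : ZMod n} (hi : pii h2 i = 0) :
    (r i : DihedralGroup n) ∈ Subgroup.closure {(r 2 : DihedralGroup n), sr j} := by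
  obtain ⟨m, hm⟩ := (pii_eq_zero_iff h2 i).mp hi
  have : (r i : DihedralGroup n) = (r 2) ^ m := by
    rw [r_two_pow, ← hm, ZMod.natCast_val, ZMod.cast_id]
  rw [this]
  exact pow_mem (Subgroup.subset_closure (by simp)) m


section cosetEquiv

variable {G' : Type*} [Group G'] {β : Type*}

/-- generic equivalence between a coset space and a concrete model. -/
noncomputable def cosetEquiv (H : Subgroup G') (f : G' → β)
    (hresp : ∀ a h, h ∈ H → f (a * h) = f a)
    (hinj : ∀ a b, f a = f b → a⁻¹ * b ∈ H)
    (hsurj : ∀ b, ∃ a, f a = b) : (G' ⧸ H) ≃ β where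
  toFun w := Quotient.liftOn' w f (by
    intro a b hab
    rw [QuotientGroup.leftRel_apply] at hab
    have : f (a * (a⁻¹ * b)) = f a := hresp a _ hab
    simpa [mul_assoc] using this.symm)
  invFun b := QuotientGroup.mk (hsurj b).choose
  left_inv w := by
    induction w using Quotient.inductionOn' with
    | h a =>
      refine Quotient.sound' ?_
      rw [QuotientGroup.leftRel_apply]
      exact hinj _ _ ((hsurj (f a)).choose_spec)
  right_inv b := (hsurj b).choose_spec

@[simp] lemma cosetEquiv_mk (H : Subgroup G') (f : G' → β) (h1) (h2') (h3) (a : G') :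
    cosetEquiv H f h1 h2' h3 (QuotientGroup.mk a) = f a := rfl

end cosetEquiv

section equivs

variable (h2 : 2 ∣ n)

@[simp] lemma r_inv (i : ZMod n) : (r i : DihedralGroup n)⁻¹ = r (-i) :=
  inv_eq_of_mul_eq_one_left (by simp)

@[simp] lemma sr_inv (i : ZMod n) : (sr i : DihedralGroup n)⁻¹ = sr i :=
  inv_eq_of_mul_eq_one_left (sr_mul_self i)

lemma phif_one : phif h2 (1 : DihedralGroup n) = 0 := by
  show phif h2 (r 0) = 0; simp [-r_zero]

lemma phif_inv (a : DihedralGroup n) : phif h2 a⁻¹ = phif h2 a := by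
  have h0 := phif_mul h2 a⁻¹ a
  rw [inv_mul_cancel, phif_one] at h0
  have h1 : phif h2 a⁻¹ = -phif h2 a := by
    rw [eq_neg_iff_add_eq_zero, h0.symm]
  rw [h1, zmod2_neg]
  
lemma tauf_one : tauf (1 : DihedralGroup n) = 0 := rfl

lemma tauf_inv (a : DihedralGroup n) : tauf a⁻¹ = tauf a := by
  rcases a with i | i <;> simp

lemma phif'_one : phif' h2 (1 : DihedralGroup n) = 0 := by
  simp [phif', phif_one, tauf_one]

lemma phif'_inv (a : DihedralGroup n) : phif' h2 a⁻¹ = phif' h2 a := by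
  simp [phif', phif_inv, tauf_inv]

lemma pii_two : pii h2 (2 : ZMod n) = 0 := by
  have : ((2 : ℕ) : ZMod n) = (2 : ZMod n) := by push_cast; ring
  rw [← this, map_natCast]
  decide

lemma phif_mem_zero {g : DihedralGroup n} (j : ZMod n)
    (hg : g ∈ Subgroup.closure {(r 2 : DihedralGroup n), sr j})
    (hj : pii h2 j + tauf (sr j : DihedralGroup n) * 0 = pii h2 j) -- dummy
    : True := trivial

lemma phic_zero_of_mem {φ : DihedralGroup n → ZMod 2}
    (φmul : ∀ a b, φ (a * b) = φ a + φ b)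
    (φinv : ∀ a, φ a⁻¹ = φ a) (φone : φ 1 = 0)
    {S : Set (DihedralGroup n)} (hS : ∀ x ∈ S, φ x = 0)
    {g : DihedralGroup n} (hg : g ∈ Subgroup.closure S) : φ g = 0 := by
  induction hg using Subgroup.closure_induction with
  | mem x hx => exact hS x hx
  | one => exact φone
  | mul x y hx hy ihx ihy => rw [φmul, ihx, ihy, add_zero]
  | inv x hx ih => rw [φinv, ih]

lemma mem_HD_of_phif {g : DihedralGroup n} (hg : phif h2 g = 0) :
    g ∈ Subgroup.closure {(r 2 : DihedralGroup n), sr 0} := by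
  rcases g with i | i
  · exact r_mem_closure h2 0 hg
  · have : (sr i : DihedralGroup n) = sr 0 * r i := by simp
    rw [this]
    exact mul_mem (Subgroup.subset_closure (by simp)) (r_mem_closure h2 0 hg)

lemma mem_HD'_of_phif' {g : DihedralGroup n} (hg : phif' h2 g = 0) :
    g ∈ Subgroup.closure {(r 2 : DihedralGroup n), sr 1} := by
  rcases g with i | i
  · simp only [phif'_r] at hg
    exact r_mem_closure h2 1 hg
  · simp only [phif'_sr] at hg
    have hone : pii h2 i = 1 := by
      have h1 : pii h2 i = -1 := by rw [eq_neg_iff_add_eq_zero]; exact hg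
      rw [h1, zmod2_neg]
    have hi : pii h2 (i - 1) = 0 := by
      rw [map_sub, map_one, hone, sub_self]
    have : (sr i : DihedralGroup n) = sr 1 * r (i - 1) := by
      rw [sr_mul_r]; congr 1; ring
    rw [this]
    exact mul_mem (Subgroup.subset_closure (by simp)) (r_mem_closure h2 1 hi)

lemma r_mem_zpowers_r_one (m : ZMod n) :
    (r m : DihedralGroup n) ∈ Subgroup.zpowers (r 1 : DihedralGroup n) := by
  refine Subgroup.mem_zpowers_iff.mpr ⟨(m.val : ℤ), ?_⟩
  rw [zpow_natCast, r_one_pow]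
  congr 1
  rw [ZMod.natCast_val, ZMod.cast_id]

lemma mem_zpowers_sr_zero {g : DihedralGroup n}
    (hg : g ∈ Subgroup.zpowers (sr 0 : DihedralGroup n)) : g = 1 ∨ g = sr 0 := by
  obtain ⟨k, rfl⟩ := Subgroup.mem_zpowers_iff.mp hg
  have hsq : (sr 0 : DihedralGroup n) ^ (2 : ℤ) = 1 := by
    rw [show (2:ℤ) = ((2:ℕ):ℤ) from rfl, zpow_natCast, pow_two, sr_mul_self]
  rcases Int.even_or_odd k with ⟨m, hm⟩ | ⟨m, hm⟩
  · left
    rw [hm, show m + m = 2 * m by ring, zpow_mul, hsq, one_zpow]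
  · right
    rw [hm, zpow_add, zpow_mul, hsq, one_zpow, one_mul, zpow_one]

end equivs

section quotequivs

variable (h2 : 2 ∣ n)

/-- model map for `G ⧸ ⟨s⟩`. -/
def psif : DihedralGroup n → ZMod n
  | DihedralGroup.r i => i
  | DihedralGroup.sr i => -i

@[simp] lemma psif_r (i : ZMod n) : psif (r i : DihedralGroup n) = i := rfl
@[simp] lemma psif_sr (i : ZMod n) : psif (sr i : DihedralGroup n) = -i := rfl

noncomputable def eG : (DihedralGroup n ⧸ (⊥ : Subgroup (DihedralGroup n))) ≃ DihedralGroup n :=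
  cosetEquiv ⊥ id (fun a h hh => by rw [Subgroup.mem_bot] at hh; simp [hh])
    (fun a b hab => by simp at hab; simp [hab]) (fun b => ⟨b, rfl⟩)

noncomputable def eT : (DihedralGroup n ⧸ (⊤ : Subgroup (DihedralGroup n))) ≃ Unit :=
  cosetEquiv ⊤ (fun _ => ()) (fun _ _ _ => rfl) (fun _ _ _ => Subgroup.mem_top _)
    (fun b => ⟨1, rfl⟩)

noncomputable def eD :
    (DihedralGroup n ⧸ Subgroup.closure {(r 2 : DihedralGroup n), sr 0}) ≃ ZMod 2 :=
  cosetEquiv _ (phif h2)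
    (fun a h hh => by
      rw [phif_mul]
      rw [phic_zero_of_mem (phif_mul h2) (phif_inv h2) (phif_one h2)
        (fun x hx => by rcases hx with hx | hx <;> subst hx <;> simp [pii_two h2]) hh,
        add_zero])
    (fun a b hab => by
      apply mem_HD_of_phif h2
      rw [phif_mul, phif_inv, hab]
      have := chi2_sq (phif h2 b)
      rcases zmod2_cases (phif h2 b) with h | h <;> rw [h] <;> decide)
    (fun c => by
      rcases zmod2_cases c with h | h <;> subst h
      · exact ⟨r 0, by simp [-r_zero]⟩
      · exact ⟨sr 1, by simp⟩)

noncomputable def eD' :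
    (DihedralGroup n ⧸ Subgroup.closure {(r 2 : DihedralGroup n), sr 1}) ≃ ZMod 2 :=
  cosetEquiv _ (phif' h2)
    (fun a h hh => by
      rw [phif'_mul]
      rw [phic_zero_of_mem (phif'_mul h2) (phif'_inv h2) (phif'_one h2)
        (fun x hx => by
          rcases hx with hx | hx <;> subst hx <;> simp [pii_two h2]
          · decide) hh,
        add_zero])
    (fun a b hab => by
      apply mem_HD'_of_phif' h2
      rw [phif'_mul, phif'_inv, hab]
      rcases zmod2_cases (phif' h2 b) with h | h <;> rw [h] <;> decide)
    (fun c => by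
      rcases zmod2_cases c with h | h <;> subst h
      · exact ⟨r 0, by simp [phif'_one]⟩
      · exact ⟨r 1, by simp⟩)

noncomputable def eC :
    (DihedralGroup n ⧸ Subgroup.zpowers (r 1 : DihedralGroup n)) ≃ ZMod 2 :=
  cosetEquiv _ tauf
    (fun a h hh => by
      rw [tauf_mul]
      obtain ⟨k, rfl⟩ := Subgroup.mem_zpowers_iff.mp hh
      have : ∃ j : ZMod n, (r 1 : DihedralGroup n) ^ k = r j := by
        rcases k with m | m
        · exact ⟨m, by rw [Int.ofNat_eq_coe, zpow_natCast, r_one_pow]⟩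
        · refine ⟨-(m+1 : ℕ), ?_⟩
          rw [zpow_negSucc, r_one_pow, r_inv]
      obtain ⟨j, hj⟩ := this
      rw [hj]; simp)
    (fun a b hab => by
      rcases a with i | i <;> rcases b with j | j <;> simp at hab ⊢ <;>
        exact r_mem_zpowers_r_one _)
    (fun c => by
      rcases zmod2_cases c with h | h <;> subst h
      · exact ⟨r 0, rfl⟩
      · exact ⟨sr 0, rfl⟩)

noncomputable def eS :
    (DihedralGroup n ⧸ Subgroup.zpowers (sr 0 : DihedralGroup n)) ≃ ZMod n :=
  cosetEquiv _ psif
    (fun a h hh => by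
      rcases mem_zpowers_sr_zero hh with rfl | rfl
      · rw [mul_one]
      · rcases a with i | i <;> simp)
    (fun a b hab => by
      rcases a with i | i <;> rcases b with j | j <;>
        simp only [psif_r, psif_sr, r_inv, sr_inv, r_mul_r, r_mul_sr, sr_mul_r,
          sr_mul_sr] at hab ⊢
      · rw [hab, show (-j + j : ZMod n) = 0 by ring, ← one_def]
        exact Subgroup.one_mem _
      · rw [show (j - -i : ZMod n) = 0 by rw [hab]; ring]
        exact Subgroup.mem_zpowers _
      · rw [show (i + j : ZMod n) = 0 by rw [← hab]; ring]
        exact Subgroup.mem_zpowers _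
      · rw [neg_inj] at hab
        subst hab
        rw [sub_self, ← one_def]
        exact Subgroup.one_mem _)
    (fun k => ⟨r k, rfl⟩)

end quotequivs

section smulcompat

variable (h2 : 2 ∣ n)

lemma eG_smul (g : DihedralGroup n) (w : DihedralGroup n ⧸ (⊥ : Subgroup (DihedralGroup n))) :
    eG (g • w) = g * eG w := by
  induction w using Quotient.inductionOn' with
  | h a =>
    show eG (g • QuotientGroup.mk a) = _
    rw [MulAction.Quotient.smul_mk]
    rfl

lemma eD_smul (g : DihedralGroup n)
    (w : DihedralGroup n ⧸ Subgroup.closure {(r 2 : DihedralGroup n), sr 0}) :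
    eD h2 (g • w) = phif h2 g + eD h2 w := by
  induction w using Quotient.inductionOn' with
  | h a =>
    show eD h2 (g • QuotientGroup.mk a) = _
    rw [MulAction.Quotient.smul_mk]
    show phif h2 (g * a) = _
    rw [phif_mul]
    rfl

lemma eD'_smul (g : DihedralGroup n)
    (w : DihedralGroup n ⧸ Subgroup.closure {(r 2 : DihedralGroup n), sr 1}) :
    eD' h2 (g • w) = phif' h2 g + eD' h2 w := by
  induction w using Quotient.inductionOn' with
  | h a =>
    show eD' h2 (g • QuotientGroup.mk a) = _
    rw [MulAction.Quotient.smul_mk]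
    show phif' h2 (g * a) = _
    rw [phif'_mul]
    rfl

lemma eC_smul (g : DihedralGroup n)
    (w : DihedralGroup n ⧸ Subgroup.zpowers (r 1 : DihedralGroup n)) :
    eC (g • w) = tauf g + eC w := by
  induction w using Quotient.inductionOn' with
  | h a =>
    show eC (g • QuotientGroup.mk a) = _
    rw [MulAction.Quotient.smul_mk]
    show tauf (g * a) = _
    rw [tauf_mul]
    rfl

lemma eS_smul_r (j : ZMod n)
    (w : DihedralGroup n ⧸ Subgroup.zpowers (sr 0 : DihedralGroup n)) :
    eS ((r j : DihedralGroup n) • w) = j + eS w := by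
  induction w using Quotient.inductionOn' with
  | h a =>
    show eS ((r j : DihedralGroup n) • QuotientGroup.mk a) = _
    rw [MulAction.Quotient.smul_mk, smul_eq_mul]
    rcases a with i | i
    · rw [r_mul_r]
      show (j + i : ZMod n) = j + i
      rfl
    · rw [r_mul_sr]
      show (-(i - j) : ZMod n) = j + -i
      ring

lemma eS_smul_sr (j : ZMod n)
    (w : DihedralGroup n ⧸ Subgroup.zpowers (sr 0 : DihedralGroup n)) :
    eS ((sr j : DihedralGroup n) • w) = -j - eS w := by
  induction w using Quotient.inductionOn' with
  | h a =>
    show eS ((sr j : DihedralGroup n) • QuotientGroup.mk a) = _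
    rw [MulAction.Quotient.smul_mk, smul_eq_mul]
    rcases a with i | i
    · rw [sr_mul_r]
      show (-(j + i) : ZMod n) = -j - i
      ring
    · rw [sr_mul_sr]
      show (i - j : ZMod n) = -j - -i
      ring

end smulcompat

section model

/-- model for the source index set -/
abbrev YL (n : ℕ) := (DihedralGroup n ⊕ (Unit ⊕ Unit)) ⊕ ZMod 2
/-- model for the target index set -/
abbrev YR (n : ℕ) := (ZMod 2 ⊕ (ZMod n ⊕ ZMod n)) ⊕ ZMod 2

abbrev rr (i : ZMod n) : YL n := Sum.inl (Sum.inl (r i))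
abbrev ss (i : ZMod n) : YL n := Sum.inl (Sum.inl (sr i))
abbrev aP : YL n := Sum.inl (Sum.inr (Sum.inl ()))
abbrev bP : YL n := Sum.inl (Sum.inr (Sum.inr ()))
abbrev dP (c : ZMod 2) : YL n := Sum.inr c

variable (h2 : 2 ∣ n)

/-- the magic matrix -/
def Fmap (x : YL n → ℚ) : YR n → ℚ
  | Sum.inl (Sum.inl c) =>
      chi2 c * (∑ i : ZMod n, (x (rr i) - x (ss i))) + x aP
  | Sum.inl (Sum.inr (Sum.inl k)) =>
      (x (rr (k + 1)) - x (rr (k - 1))) + (x (ss (1 - k)) - x (ss (-1 - k)))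
        + x bP + chi h2 k * (x (dP 0) - x (dP 1))
  | Sum.inl (Sum.inr (Sum.inr k)) => x (rr k) + x (ss (-k))
  | Sum.inr c =>
      chi2 c * (∑ i : ZMod n, chi h2 i * (x (rr i) - x (ss i))) + (x (dP 0) + x (dP 1))

def actL (g : DihedralGroup n) : YL n → YL n
  | Sum.inl (Sum.inl h) => Sum.inl (Sum.inl (g * h))
  | Sum.inl (Sum.inr u) => Sum.inl (Sum.inr u)
  | Sum.inr c => Sum.inr (phif h2 g + c)

def act0 : DihedralGroup n → ZMod n → ZMod n
  | DihedralGroup.r j, k => j + k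
  | DihedralGroup.sr j, k => -j - k

def actR (g : DihedralGroup n) : YR n → YR n
  | Sum.inl (Sum.inl c) => Sum.inl (Sum.inl (tauf g + c))
  | Sum.inl (Sum.inr (Sum.inl k)) => Sum.inl (Sum.inr (Sum.inl (act0 g k)))
  | Sum.inl (Sum.inr (Sum.inr k)) => Sum.inl (Sum.inr (Sum.inr (act0 g k)))
  | Sum.inr c => Sum.inr (phif' h2 g + c)

lemma sum_sub' (u v : ZMod n → ℚ) :
    ∑ i : ZMod n, (u i - v i) = ∑ i : ZMod n, u i - ∑ i : ZMod n, v i :=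
  Finset.sum_sub_distrib u v

lemma sum1 (x : YL n → ℚ) (j : ZMod n) :
    ∑ i : ZMod n, (x (rr (j + i)) - x (ss (i - j))) = ∑ i : ZMod n, (x (rr i) - x (ss i)) := by
  rw [sum_sub', sum_addLeft (fun m => x (rr m)) j, sum_subRight (fun m => x (ss m)) j,
    ← sum_sub']

lemma sum2 (x : YL n → ℚ) (j : ZMod n) :
    ∑ i : ZMod n, (x (ss (j + i)) - x (rr (i - j))) = -∑ i : ZMod n, (x (rr i) - x (ss i)) := by
  have hh : -∑ i : ZMod n, (x (rr i) - x (ss i))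
      = ∑ i : ZMod n, x (ss i) - ∑ i : ZMod n, x (rr i) := by
    rw [sum_sub']; ring
  rw [sum_sub', sum_addLeft (fun m => x (ss m)) j, sum_subRight (fun m => x (rr m)) j, hh]

lemma chi_sub (k j : ZMod n) : chi h2 (k - j) = chi h2 k * chi h2 j := by
  rw [sub_eq_add_neg, chi_add, chi_neg]

lemma wsum_r (u : ZMod n → ℚ) (j : ZMod n) :
    ∑ i : ZMod n, chi h2 i * u (j + i) = chi h2 j * ∑ i : ZMod n, chi h2 i * u i := by
  have h1 : ∑ i : ZMod n, chi h2 i * u (j + i)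
      = ∑ i : ZMod n, (fun m => chi h2 (m - j) * u m) (j + i) := by
    refine Finset.sum_congr rfl fun i _ => ?_
    simp only [add_sub_cancel_left]
  rw [h1, sum_addLeft (fun m => chi h2 (m - j) * u m) j]
  rw [Finset.mul_sum]
  refine Finset.sum_congr rfl fun i _ => ?_
  rw [chi_sub]
  ring

lemma wsum_r' (u : ZMod n → ℚ) (j : ZMod n) :
    ∑ i : ZMod n, chi h2 i * u (i - j) = chi h2 j * ∑ i : ZMod n, chi h2 i * u i := by
  have h1 : ∑ i : ZMod n, chi h2 i * u (i - j)
      = ∑ i : ZMod n, (fun m => chi h2 (m + j) * u m) (i - j) := by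
    refine Finset.sum_congr rfl fun i _ => ?_
    simp only [sub_add_cancel]
  rw [h1, sum_subRight (fun m => chi h2 (m + j) * u m) j]
  rw [Finset.mul_sum]
  refine Finset.sum_congr rfl fun i _ => ?_
  rw [chi_add]
  ring

lemma sum3 (x : YL n → ℚ) (j : ZMod n) :
    ∑ i : ZMod n, chi h2 i * (x (rr (j + i)) - x (ss (i - j)))
      = chi h2 j * ∑ i : ZMod n, chi h2 i * (x (rr i) - x (ss i)) := by
  have e1 : ∀ i : ZMod n, chi h2 i * (x (rr (j + i)) - x (ss (i - j)))
      = chi h2 i * x (rr (j + i)) - chi h2 i * x (ss (i - j)) := fun i => by ring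
  have e2 : ∀ i : ZMod n, chi h2 i * (x (rr i) - x (ss i))
      = chi h2 i * x (rr i) - chi h2 i * x (ss i) := fun i => by ring
  simp only [e1, e2, sum_sub']
  rw [wsum_r h2 (fun m => x (rr m)) j, wsum_r' h2 (fun m => x (ss m)) j]
  ring

lemma sum4 (x : YL n → ℚ) (j : ZMod n) :
    ∑ i : ZMod n, chi h2 i * (x (ss (j + i)) - x (rr (i - j)))
      = -(chi h2 j * ∑ i : ZMod n, chi h2 i * (x (rr i) - x (ss i))) := by
  have e1 : ∀ i : ZMod n, chi h2 i * (x (ss (j + i)) - x (rr (i - j)))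
      = chi h2 i * x (ss (j + i)) - chi h2 i * x (rr (i - j)) := fun i => by ring
  have e2 : ∀ i : ZMod n, chi h2 i * (x (rr i) - x (ss i))
      = chi h2 i * x (rr i) - chi h2 i * x (ss i) := fun i => by ring
  simp only [e1, e2, sum_sub']
  rw [wsum_r h2 (fun m => x (ss m)) j, wsum_r' h2 (fun m => x (rr m)) j]
  ring

lemma dsum_inv (x : YL n → ℚ) (t : ZMod 2) :
    x (dP (t + 0)) + x (dP (t + 1)) = x (dP 0) + x (dP 1) := by
  rcases zmod2_cases t with h | h <;> subst h
  · rw [zero_add, zero_add]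
  · rw [add_zero, show ((1 : ZMod 2) + 1) = 0 from rfl]
    ring

lemma ddiff (x : YL n → ℚ) (t : ZMod 2) :
    x (dP (t + 0)) - x (dP (t + 1)) = chi2 t * (x (dP 0) - x (dP 1)) := by
  rcases zmod2_cases t with h | h <;> subst h
  · rw [zero_add, zero_add, chi2_zero]; ring
  · rw [add_zero, show ((1 : ZMod 2) + 1) = 0 from rfl, chi2_one]; ring

lemma chi2_pii (j : ZMod n) : chi2 (pii h2 j) = chi h2 j := rfl

lemma Fmap_equivariant (g : DihedralGroup n) (x : YL n → ℚ) (z : YR n) :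
    Fmap h2 (fun y => x (actL h2 g y)) z = Fmap h2 x (actR h2 g z) := by
  rcases g with j | j <;> rcases z with (c | k | k) | c
  · -- r j, t c
    simp only [Fmap, actR, actL, act0, tauf_r, zero_add, r_mul_r, r_mul_sr]
    rw [sum1]
  · -- r j, u1 k
    simp only [Fmap, actR, actL, act0, r_mul_r, r_mul_sr, phif_r]
    rw [ddiff, chi2_pii]
    have h1 : j + (k + 1) = j + k + 1 := by ring
    have h2' : j + (k - 1) = j + k - 1 := by ring
    have h3 : 1 - k - j = 1 - (j + k) := by ring
    have h4 : -1 - k - j = -1 - (j + k) := by ring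
    rw [h1, h2', h3, h4, chi_add]
    ring
  · -- r j, u2 k
    simp only [Fmap, actR, actL, act0, r_mul_r, r_mul_sr]
    have h1 : -k - j = -(j + k) := by ring
    rw [h1]
  · -- r j, q c
    simp only [Fmap, actR, actL, act0, r_mul_r, r_mul_sr, phif'_r, phif_r]
    rw [sum3, dsum_inv, chi2_add, chi2_pii]
    ring
  · -- sr j, t c
    simp only [Fmap, actR, actL, act0, tauf_sr, sr_mul_r, sr_mul_sr]
    rw [sum2, chi2_add, chi2_one]
    ring
  · -- sr j, u1 k
    simp only [Fmap, actR, actL, act0, sr_mul_r, sr_mul_sr, phif_sr]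
    rw [ddiff, chi2_pii]
    have h1 : j + (k + 1) = 1 - (-j - k) := by ring
    have h2' : j + (k - 1) = -1 - (-j - k) := by ring
    have h3 : 1 - k - j = -j - k + 1 := by ring
    have h4 : -1 - k - j = -j - k - 1 := by ring
    rw [h1, h2', h3, h4]
    have h5 : chi h2 (-j - k) = chi h2 j * chi h2 k := by
      rw [show -j - k = -(j + k) by ring, chi_neg, chi_add]
    rw [h5]
    ring
  · -- sr j, u2 k
    simp only [Fmap, actR, actL, act0, sr_mul_r, sr_mul_sr]
    have h1 : -k - j = -j - k + 0 := by ring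
    have h3 : -(-j - k) = j + k := by ring
    rw [h3, show (-j - k : ZMod n) = -j - k by rfl]
    have h4 : j + k = k + j := by ring
    rw [show x (Sum.inl (Sum.inl (sr (j + k)))) + x (Sum.inl (Sum.inl (r (-k - j))))
        = x (Sum.inl (Sum.inl (r (-j - k)))) + x (Sum.inl (Sum.inl (sr (j + k)))) by
      rw [show (-k - j : ZMod n) = -j - k by ring]; ring]
  · -- sr j, q c
    simp only [Fmap, actR, actL, act0, sr_mul_r, sr_mul_sr, phif'_sr, phif_sr]
    rw [sum4, dsum_inv]
    rw [chi2_add, chi2_add, chi2_pii, chi2_one]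
    ring

end model

section linear

variable (h2 : 2 ∣ n)

def Flin : (YL n → ℚ) →ₗ[ℚ] (YR n → ℚ) where
  toFun := Fmap h2
  map_add' x y := by
    funext z
    rcases z with (c | k | k) | c <;>
      simp only [Fmap, Pi.add_apply]
    · rw [show (∑ i : ZMod n, (x (rr i) + y (rr i) - (x (ss i) + y (ss i))))
          = (∑ i : ZMod n, (x (rr i) - x (ss i))) + ∑ i : ZMod n, (y (rr i) - y (ss i)) by
        rw [← Finset.sum_add_distrib]; exact Finset.sum_congr rfl fun i _ => by ring]
      ring
    · ring
    · ring
    · rw [show (∑ i : ZMod n, chi h2 i * (x (rr i) + y (rr i) - (x (ss i) + y (ss i))))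
          = (∑ i : ZMod n, chi h2 i * (x (rr i) - x (ss i)))
            + ∑ i : ZMod n, chi h2 i * (y (rr i) - y (ss i)) by
        rw [← Finset.sum_add_distrib]; exact Finset.sum_congr rfl fun i _ => by ring]
      ring
  map_smul' a x := by
    funext z
    rcases z with (c | k | k) | c <;>
      simp only [Fmap, Pi.smul_apply, smul_eq_mul, RingHom.id_apply]
    · rw [show (∑ i : ZMod n, (a * x (rr i) - a * x (ss i)))
          = a * ∑ i : ZMod n, (x (rr i) - x (ss i)) by
        rw [Finset.mul_sum]; exact Finset.sum_congr rfl fun i _ => by ring]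
      ring
    · ring
    · ring
    · rw [show (∑ i : ZMod n, chi h2 i * (a * x (rr i) - a * x (ss i)))
          = a * ∑ i : ZMod n, chi h2 i * (x (rr i) - x (ss i)) by
        rw [Finset.mul_sum]; exact Finset.sum_congr rfl fun i _ => by ring]
      ring

lemma g_parity (g : ZMod n → ℚ) (hp : ∀ k, g (k + 2) = g k) (k : ZMod n) :
    g k = if pii h2 k = 0 then g 0 else g 1 := by
  have key : ∀ (m : ℕ) (k0 : ZMod n), g (k0 + 2 * (m : ZMod n)) = g k0 := by
    intro m
    induction m with
    | zero => intro k0; simp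
    | succ p ih =>
      intro k0
      have : (k0 + 2 * ((p + 1 : ℕ) : ZMod n)) = (k0 + 2 * (p : ZMod n)) + 2 := by
        push_cast; ring
      rw [this, hp, ih]
  have hk : ((k.val % 2 : ℕ) : ZMod n) + 2 * ((k.val / 2 : ℕ) : ZMod n) = k := by
    have h1 : ((k.val % 2 + 2 * (k.val / 2) : ℕ) : ZMod n) = (k.val : ZMod n) := by
      congr 1
      omega
    push_cast at h1
    rw [ZMod.natCast_val, ZMod.cast_id] at h1
    linear_combination h1
  have hgk : g k = g ((k.val % 2 : ℕ) : ZMod n) := by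
    conv_lhs => rw [← hk]
    exact key _ _
  have hpik : pii h2 k = ((k.val % 2 : ℕ) : ZMod 2) := by
    conv_lhs => rw [← hk]
    rw [map_add, map_mul, pii_two h2, zero_mul, add_zero, map_natCast]
  rcases Nat.mod_two_eq_zero_or_one k.val with h | h <;> rw [h] at hgk hpik
  · rw [hgk, hpik]
    simp
  · rw [hgk, hpik, if_neg (by rw [show (((1:ℕ)) : ZMod 2) = 1 from rfl]; decide)]
    norm_num

lemma Flin_injective (hn : 0 < n) : Function.Injective (Flin (n := n) h2) := by
  rw [injective_iff_map_eq_zero]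
  intro x hx
  have hnq : (n : ℚ) ≠ 0 := by positivity
  -- coordinate equations
  have ht : ∀ c : ZMod 2,
      chi2 c * (∑ i : ZMod n, (x (rr i) - x (ss i))) + x aP = 0 := fun c =>
    congrFun hx (Sum.inl (Sum.inl c))
  have hu1 : ∀ k : ZMod n,
      (x (rr (k + 1)) - x (rr (k - 1))) + (x (ss (1 - k)) - x (ss (-1 - k)))
        + x bP + chi h2 k * (x (dP 0) - x (dP 1)) = 0 := fun k =>
    congrFun hx (Sum.inl (Sum.inr (Sum.inl k)))
  have hu2 : ∀ k : ZMod n, x (rr k) + x (ss (-k)) = 0 := fun k =>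
    congrFun hx (Sum.inl (Sum.inr (Sum.inr k)))
  have hq : ∀ c : ZMod 2,
      chi2 c * (∑ i : ZMod n, chi h2 i * (x (rr i) - x (ss i)))
        + (x (dP 0) + x (dP 1)) = 0 := fun c =>
    congrFun hx (Sum.inr c)
  -- basic eliminations
  have hA : x aP = 0 := by
    have h0 := ht 0
    have h1 := ht 1
    rw [chi2_zero] at h0
    rw [chi2_one] at h1
    linarith
  have hS : (∑ i : ZMod n, (x (rr i) - x (ss i))) = 0 := by
    have h0 := ht 0
    rw [chi2_zero, hA] at h0
    linarith
  have hP : x (dP 0) + x (dP 1) = 0 := by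
    have h0 := hq 0
    have h1 := hq 1
    rw [chi2_zero] at h0
    rw [chi2_one] at h1
    linarith
  have hSchi : (∑ i : ZMod n, chi h2 i * (x (rr i) - x (ss i))) = 0 := by
    have h0 := hq 0
    rw [chi2_zero, hP] at h0
    linarith
  have hss : ∀ m : ZMod n, x (ss m) = -x (rr (-m)) := by
    intro m
    have := hu2 (-m)
    rw [neg_neg] at this
    linarith
  -- reduce to the function g := x ∘ rr
  set gg : ZMod n → ℚ := fun k => x (rr k) with hgg
  have hsum0 : ∑ k : ZMod n, gg k = 0 := by
    have h1 : ∑ i : ZMod n, (gg i + gg (-i)) = 0 := by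
      rw [← hS]
      refine Finset.sum_congr rfl fun i _ => ?_
      simp only [hgg]
      rw [hss i]
      ring
    rw [Finset.sum_add_distrib, sum_neg' gg] at h1
    linarith
  have hsum1 : ∑ k : ZMod n, chi h2 k * gg k = 0 := by
    have h1 : ∑ i : ZMod n, (chi h2 i * gg i + chi h2 (-i) * gg (-i)) = 0 := by
      rw [← hSchi]
      refine Finset.sum_congr rfl fun i _ => ?_
      simp only [hgg]
      rw [hss i, chi_neg]
      ring
    rw [Finset.sum_add_distrib, sum_neg' (fun m => chi h2 m * gg m)] at h1
    linarith
  have hkey : ∀ k : ZMod n,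
      2 * (gg (k + 1) - gg (k - 1)) + x bP + chi h2 k * (x (dP 0) - x (dP 1)) = 0 := by
    intro k
    have h := hu1 k
    have e1 : x (ss (1 - k)) = -gg (k - 1) := by
      rw [hss, show (-(1 - k) : ZMod n) = k - 1 by ring]
    have e2 : x (ss (-1 - k)) = -gg (k + 1) := by
      rw [hss, show (-(-1 - k) : ZMod n) = k + 1 by ring]
    rw [e1, e2] at h
    have e3 : x (rr (k+1)) = gg (k+1) := rfl
    have e4 : x (rr (k-1)) = gg (k-1) := rfl
    rw [e3, e4] at h
    linarith
  -- sum the key identity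
  have hB : x bP = 0 := by
    have hsum := Finset.sum_congr rfl (fun k (_ : k ∈ Finset.univ) => (hkey k))
    have htot : ∑ k : ZMod n,
        (2 * (gg (k + 1) - gg (k - 1)) + x bP + chi h2 k * (x (dP 0) - x (dP 1))) = 0 := by
      rw [hsum]; simp
    have hshift : ∑ k : ZMod n, (gg (k + 1) - gg (k - 1)) = 0 := by
      rw [sum_sub']
      rw [show ∑ k : ZMod n, gg (k + 1) = ∑ k : ZMod n, gg k from
        sum_reindex (Equiv.addRight 1) (fun m => gg m)]
      rw [show ∑ k : ZMod n, gg (k - 1) = ∑ k : ZMod n, gg k from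
        sum_subRight (fun m => gg m) 1]
      ring
    have e1 : ∑ k : ZMod n, 2 * (gg (k + 1) - gg (k - 1))
        = 2 * ∑ k : ZMod n, (gg (k + 1) - gg (k - 1)) := (Finset.mul_sum _ _ _).symm
    have e2 : ∑ _k : ZMod n, x bP = (n : ℚ) * x bP := by
      rw [Finset.sum_const, Finset.card_univ, ZMod.card, nsmul_eq_mul]
    have e3 : ∑ k : ZMod n, chi h2 k * (x (dP 0) - x (dP 1))
        = (∑ k : ZMod n, chi h2 k) * (x (dP 0) - x (dP 1)) := (Finset.sum_mul _ _ _).symm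
    rw [Finset.sum_add_distrib, Finset.sum_add_distrib, e1, e2, e3, hshift, sum_chi] at htot
    have : (n : ℚ) * x bP = 0 := by linarith
    exact (mul_eq_zero.mp this).resolve_left hnq
  have hPdiff : x (dP 0) - x (dP 1) = 0 := by
    have hsum := Finset.sum_congr rfl
      (fun k (_ : k ∈ Finset.univ) => congrArg (fun t => chi h2 k * t) (hkey k))
    have htot : ∑ k : ZMod n, chi h2 k *
        (2 * (gg (k + 1) - gg (k - 1)) + x bP + chi h2 k * (x (dP 0) - x (dP 1))) = 0 := by
      rw [hsum]; simp
    have hs1 : ∑ k : ZMod n, chi h2 k * gg (k + 1) = 0 := by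
      have : ∑ k : ZMod n, chi h2 k * gg (k + 1)
          = ∑ k : ZMod n, (fun m => chi h2 (m - 1) * gg m) (k + 1) := by
        refine Finset.sum_congr rfl fun k _ => ?_
        simp only [add_sub_cancel_right]
      rw [this, show ∑ k : ZMod n, (fun m => chi h2 (m - 1) * gg m) (k + 1)
          = ∑ m : ZMod n, chi h2 (m - 1) * gg m from
        sum_reindex (Equiv.addRight 1) (fun m => chi h2 (m - 1) * gg m)]
      calc ∑ m : ZMod n, chi h2 (m - 1) * gg m
          = ∑ m : ZMod n, (chi h2 1)⁻¹ * (chi h2 m * gg m) := by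
            refine Finset.sum_congr rfl fun m _ => ?_
            rw [chi_sub, chi_one]
            ring
        _ = 0 := by rw [← Finset.mul_sum, hsum1, mul_zero]
    have hs2 : ∑ k : ZMod n, chi h2 k * gg (k - 1) = 0 := by
      have : ∑ k : ZMod n, chi h2 k * gg (k - 1)
          = ∑ k : ZMod n, (fun m => chi h2 (m + 1) * gg m) (k - 1) := by
        refine Finset.sum_congr rfl fun k _ => ?_
        simp only [sub_add_cancel]
      rw [this, sum_subRight (fun m => chi h2 (m + 1) * gg m) 1]
      calc ∑ m : ZMod n, chi h2 (m + 1) * gg m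
          = ∑ m : ZMod n, chi h2 1 * (chi h2 m * gg m) := by
            refine Finset.sum_congr rfl fun m _ => ?_
            rw [chi_add]
            ring
        _ = 0 := by rw [← Finset.mul_sum, hsum1, mul_zero]
    have hexp : ∀ k : ZMod n, chi h2 k *
        (2 * (gg (k + 1) - gg (k - 1)) + x bP + chi h2 k * (x (dP 0) - x (dP 1)))
        = 2 * (chi h2 k * gg (k + 1)) - 2 * (chi h2 k * gg (k - 1))
          + chi h2 k * x bP + (chi h2 k * chi h2 k) * (x (dP 0) - x (dP 1)) :=
      fun k => by ring
    rw [Finset.sum_congr rfl (fun k _ => hexp k)] at htot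
    rw [Finset.sum_add_distrib, Finset.sum_add_distrib, Finset.sum_sub_distrib] at htot
    rw [show ∑ k : ZMod n, 2 * (chi h2 k * gg (k + 1))
        = 2 * ∑ k : ZMod n, chi h2 k * gg (k + 1) from (Finset.mul_sum _ _ _).symm] at htot
    rw [show ∑ k : ZMod n, 2 * (chi h2 k * gg (k - 1))
        = 2 * ∑ k : ZMod n, chi h2 k * gg (k - 1) from (Finset.mul_sum _ _ _).symm] at htot
    rw [show ∑ k : ZMod n, chi h2 k * x bP
        = (∑ k : ZMod n, chi h2 k) * x bP from (Finset.sum_mul _ _ _).symm] at htot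
    rw [show ∑ k : ZMod n, (chi h2 k * chi h2 k) * (x (dP 0) - x (dP 1))
        = (∑ k : ZMod n, chi h2 k * chi h2 k) * (x (dP 0) - x (dP 1)) from
      (Finset.sum_mul _ _ _).symm] at htot
    rw [hs1, hs2, sum_chi, sum_chi_sq] at htot
    have : (n : ℚ) * (x (dP 0) - x (dP 1)) = 0 := by linarith
    exact (mul_eq_zero.mp this).resolve_left hnq
  have hP0 : x (dP 0) = 0 := by linarith
  have hP1 : x (dP 1) = 0 := by linarith
  -- now gg is parity-periodic
  have hper : ∀ k : ZMod n, gg (k + 2) = gg k := by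
    intro k
    have h := hkey (k + 1)
    rw [hB, hPdiff, mul_zero, add_zero, add_zero] at h
    have : gg (k + 1 + 1) = gg (k + 1 - 1) := by linarith
    rw [show k + 1 + 1 = k + 2 by ring, show k + 1 - 1 = k by ring] at this
    exact this
  have hgform : ∀ k : ZMod n, gg k = if pii h2 k = 0 then gg 0 else gg 1 :=
    g_parity h2 gg hper
  have hg0 : gg 0 = 0 := by
    have he : ∑ k : ZMod n, (1 + chi h2 k) * gg k = (n : ℚ) * gg 0 := by
      have hpt : ∀ k : ZMod n, (1 + chi h2 k) * gg k = (1 + chi h2 k) * gg 0 := by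
        intro k
        rcases zmod2_cases (pii h2 k) with h | h
        · rw [hgform k, h]; simp
        · have : chi h2 k = -1 := by rw [chi, h, chi2_one]
          rw [this]; ring
      calc ∑ k : ZMod n, (1 + chi h2 k) * gg k = ∑ k : ZMod n, (1 + chi h2 k) * gg 0 :=
            Finset.sum_congr rfl fun k _ => hpt k
        _ = (∑ k : ZMod n, (1 + chi h2 k)) * gg 0 := by rw [← Finset.sum_mul]
        _ = (n : ℚ) * gg 0 := by
            rw [Finset.sum_add_distrib, Finset.sum_const, Finset.card_univ, ZMod.card,
              sum_chi, nsmul_eq_mul]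
            push_cast
            ring
    have he2 : ∑ k : ZMod n, (1 + chi h2 k) * gg k = 0 := by
      have : ∀ k : ZMod n, (1 + chi h2 k) * gg k = gg k + chi h2 k * gg k := fun k => by ring
      simp only [this]
      rw [Finset.sum_add_distrib, hsum0, hsum1]
      ring
    rw [he2] at he
    exact ((mul_eq_zero.mp he.symm).resolve_left hnq)
  have hg1 : gg 1 = 0 := by
    have he : ∑ k : ZMod n, (1 - chi h2 k) * gg k = (n : ℚ) * gg 1 := by
      have hpt : ∀ k : ZMod n, (1 - chi h2 k) * gg k = (1 - chi h2 k) * gg 1 := by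
        intro k
        rcases zmod2_cases (pii h2 k) with h | h
        · have : chi h2 k = 1 := by rw [chi, h, chi2_zero]
          rw [this]; ring
        · rw [hgform k, h]
          simp
      calc ∑ k : ZMod n, (1 - chi h2 k) * gg k = ∑ k : ZMod n, (1 - chi h2 k) * gg 1 :=
            Finset.sum_congr rfl fun k _ => hpt k
        _ = (∑ k : ZMod n, (1 - chi h2 k)) * gg 1 := by rw [← Finset.sum_mul]
        _ = (n : ℚ) * gg 1 := by
            rw [Finset.sum_sub_distrib, Finset.sum_const, Finset.card_univ, ZMod.card,
              sum_chi, nsmul_eq_mul]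
            push_cast
            ring
    have he2 : ∑ k : ZMod n, (1 - chi h2 k) * gg k = 0 := by
      have : ∀ k : ZMod n, (1 - chi h2 k) * gg k = gg k - chi h2 k * gg k := fun k => by ring
      simp only [this]
      rw [Finset.sum_sub_distrib, hsum0, hsum1]
      ring
    rw [he2] at he
    exact ((mul_eq_zero.mp he.symm).resolve_left hnq)
  have hgall : ∀ k : ZMod n, gg k = 0 := by
    intro k
    rw [hgform k]
    rcases zmod2_cases (pii h2 k) with h | h
    · rw [if_pos h, hg0]
    · rw [if_neg (by rw [h]; decide), hg1]
  -- conclude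
  funext y
  rw [Pi.zero_apply]
  rcases y with ((i | i) | u | u) | c
  · have h0 := hgall i
    simp only [hgg] at h0
    exact h0
  · have h0 := hgall (-i)
    simp only [hgg] at h0
    rw [hss i, h0]
    ring
  · exact hA
  · exact hB
  · rcases zmod2_cases c with h | h <;> subst h
    · exact hP0
    · exact hP1

end linear

section glue

variable (h2 : 2 ∣ n)

noncomputable def iotaL :
    (((DihedralGroup n ⧸ (⊥ : Subgroup (DihedralGroup n))) ⊕
      ((DihedralGroup n ⧸ (⊤ : Subgroup (DihedralGroup n))) ⊕
       (DihedralGroup n ⧸ (⊤ : Subgroup (DihedralGroup n))))) ⊕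
     (DihedralGroup n ⧸ Subgroup.closure {(r 2 : DihedralGroup n), sr 0})) ≃ YL n :=
  Equiv.sumCongr (Equiv.sumCongr eG (Equiv.sumCongr eT eT)) (eD h2)

noncomputable def iotaR :
    (((DihedralGroup n ⧸ Subgroup.zpowers (r 1 : DihedralGroup n)) ⊕
      ((DihedralGroup n ⧸ Subgroup.zpowers (sr 0 : DihedralGroup n)) ⊕
       (DihedralGroup n ⧸ Subgroup.zpowers (sr 0 : DihedralGroup n)))) ⊕
     (DihedralGroup n ⧸ Subgroup.closure {(r 2 : DihedralGroup n), sr 1})) ≃ YR n :=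
  Equiv.sumCongr (Equiv.sumCongr eC (Equiv.sumCongr eS eS)) (eD' h2)

lemma iotaL_smul (g : DihedralGroup n) (w) :
    iotaL h2 (g • w) = actL h2 g (iotaL h2 w) := by
  rcases w with ((w | (w | w)) | w)
  · rw [Sum.smul_inl, Sum.smul_inl]
    show Sum.inl (Sum.inl (eG (g • w))) = actL h2 g (Sum.inl (Sum.inl (eG w)))
    rw [eG_smul]
    rfl
  · rw [Sum.smul_inl, Sum.smul_inr, Sum.smul_inl]
    rfl
  · rw [Sum.smul_inl, Sum.smul_inr, Sum.smul_inr]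
    rfl
  · rw [Sum.smul_inr]
    show Sum.inr (eD h2 (g • w)) = actL h2 g (Sum.inr (eD h2 w))
    rw [eD_smul]
    rfl

lemma iotaR_smul (g : DihedralGroup n) (z) :
    iotaR h2 (g • z) = actR h2 g (iotaR h2 z) := by
  rcases z with ((w | (w | w)) | w)
  · rw [Sum.smul_inl, Sum.smul_inl]
    show Sum.inl (Sum.inl (eC (g • w))) = actR h2 g (Sum.inl (Sum.inl (eC w)))
    rw [eC_smul]
    rfl
  · rw [Sum.smul_inl, Sum.smul_inr, Sum.smul_inl]
    show Sum.inl (Sum.inr (Sum.inl (eS (g • w)))) = actR h2 g _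
    rcases g with j | j
    · rw [eS_smul_r]
      rfl
    · rw [eS_smul_sr]
      rfl
  · rw [Sum.smul_inl, Sum.smul_inr, Sum.smul_inr]
    show Sum.inl (Sum.inr (Sum.inr (eS (g • w)))) = actR h2 g _
    rcases g with j | j
    · rw [eS_smul_r]
      rfl
    · rw [eS_smul_sr]
      rfl
  · rw [Sum.smul_inr]
    show Sum.inr (eD' h2 (g • w)) = actR h2 g (Sum.inr (eD' h2 w))
    rw [eD'_smul]
    rfl

lemma iotaL_symm_act (g : DihedralGroup n) (y : YL n) :
    (iotaL h2).symm (actL h2 g y) = g • (iotaL h2).symm y := by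
  apply (iotaL h2).injective
  rw [Equiv.apply_symm_apply, iotaL_smul, Equiv.apply_symm_apply]

noncomputable def Fequiv (hn : 0 < n) : (YL n → ℚ) ≃ₗ[ℚ] (YR n → ℚ) :=
  (Flin h2).linearEquivOfInjective (Flin_injective h2 hn)
    (by
      rw [Module.finrank_pi, Module.finrank_pi]
      simp only [Fintype.card_sum, DihedralGroup.card, ZMod.card, Fintype.card_unit]
      ring)

lemma Fequiv_apply (hn : 0 < n) (x : YL n → ℚ) : Fequiv h2 hn x = Fmap h2 x := rfl

noncomputable def bigE (hn : 0 < n) :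
    ((((DihedralGroup n ⧸ (⊥ : Subgroup (DihedralGroup n))) ⊕
      ((DihedralGroup n ⧸ (⊤ : Subgroup (DihedralGroup n))) ⊕
       (DihedralGroup n ⧸ (⊤ : Subgroup (DihedralGroup n))))) ⊕
     (DihedralGroup n ⧸ Subgroup.closure {(r 2 : DihedralGroup n), sr 0})) →₀ ℚ) ≃ₗ[ℚ]
    ((((DihedralGroup n ⧸ Subgroup.zpowers (r 1 : DihedralGroup n)) ⊕
      ((DihedralGroup n ⧸ Subgroup.zpowers (sr 0 : DihedralGroup n)) ⊕
       (DihedralGroup n ⧸ Subgroup.zpowers (sr 0 : DihedralGroup n)))) ⊕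
     (DihedralGroup n ⧸ Subgroup.closure {(r 2 : DihedralGroup n), sr 1})) →₀ ℚ) :=
  (Finsupp.domLCongr (iotaL h2)).trans
    ((Finsupp.linearEquivFunOnFinite ℚ ℚ (YL n)).trans
      ((Fequiv h2 hn).trans
        ((Finsupp.linearEquivFunOnFinite ℚ ℚ (YR n)).symm.trans
          (Finsupp.domLCongr (iotaR h2).symm))))

lemma bigE_apply (hn : 0 < n) (w) (z) :
    bigE h2 hn w z = Fmap h2 (fun y => w ((iotaL h2).symm y)) (iotaR h2 z) := by
  simp only [bigE, LinearEquiv.trans_apply, Finsupp.domLCongr_apply, Finsupp.domCongr_apply,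
    Finsupp.equivMapDomain_apply, Equiv.symm_symm]
  rfl

end glue

lemma lmapDomain_smul_apply {G X : Type*} [Group G] [MulAction G X] (g : G) (w : X →₀ ℚ)
    (y : X) : Finsupp.lmapDomain ℚ ℚ (fun x => g • x) w y = w (g⁻¹ • y) := by
  rw [Finsupp.lmapDomain_apply]
  have := Finsupp.mapDomain_apply (MulAction.injective g) w (g⁻¹ • y)
  simpa using this

end DBRaux



open DBRaux in
/-- For even `n`, with `G = D_{2n}`, `C₂ = ⟨s⟩`, `Cₙ = ⟨r⟩`,
`Dₙ = ⟨r², s⟩`, `Dₙ' = ⟨r², sr⟩`, there is an isomorphism of `ℚ[G]`-modules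
`ℚ[G/1] ⊕ ℚ[G/G]^{⊕2} ⊕ ℚ[G/Dₙ] ≅ ℚ[G/Cₙ] ⊕ ℚ[G/C₂]^{⊕2} ⊕ ℚ[G/Dₙ']`, i.e. a `ℚ`-linear
equivalence of the permutation modules on the disjoint unions of cosets commuting with `G`. -/
theorem dihedral_brauer_relation_even (n : ℕ) (hn : 0 < n) (heven : Even n) :
    ∃ e : (((DihedralGroup n ⧸ (⊥ : Subgroup (DihedralGroup n))) ⊕
            ((DihedralGroup n ⧸ (⊤ : Subgroup (DihedralGroup n))) ⊕
             (DihedralGroup n ⧸ (⊤ : Subgroup (DihedralGroup n))))) ⊕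
           (DihedralGroup n ⧸ Subgroup.closure {(r 2 : DihedralGroup n), sr 0}) →₀ ℚ) ≃ₗ[ℚ]
          (((DihedralGroup n ⧸ Subgroup.zpowers (r 1 : DihedralGroup n)) ⊕
            ((DihedralGroup n ⧸ Subgroup.zpowers (sr 0 : DihedralGroup n)) ⊕
             (DihedralGroup n ⧸ Subgroup.zpowers (sr 0 : DihedralGroup n)))) ⊕
           (DihedralGroup n ⧸ Subgroup.closure {(r 2 : DihedralGroup n), sr 1}) →₀ ℚ),
      ∀ (g : DihedralGroup n) (v),
        e (Finsupp.lmapDomain ℚ ℚ (fun x => g • x) v) =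
          Finsupp.lmapDomain ℚ ℚ (fun x => g • x) (e v) := by
  haveI : NeZero n := ⟨hn.ne'⟩
  have h2 : 2 ∣ n := heven.two_dvd
  refine ⟨bigE h2 hn, ?_⟩
  intro g v
  ext z
  have L : (bigE h2 hn) (Finsupp.lmapDomain ℚ ℚ (fun x => g • x) v) z
      = Fmap h2 (fun y => v ((iotaL h2).symm (actL h2 g⁻¹ y))) (iotaR h2 z) := by
    rw [bigE_apply]
    have hfun : (fun y => (Finsupp.lmapDomain ℚ ℚ (fun x => g • x) v)
          ((iotaL h2).symm y))
        = fun y => v ((iotaL h2).symm (actL h2 g⁻¹ y)) := by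
      funext y
      rw [lmapDomain_smul_apply, iotaL_symm_act]
    rw [hfun]
  have R : (Finsupp.lmapDomain ℚ ℚ (fun x => g • x) ((bigE h2 hn) v)) z
      = Fmap h2 (fun y => v ((iotaL h2).symm y)) (actR h2 g⁻¹ (iotaR h2 z)) := by
    rw [lmapDomain_smul_apply, bigE_apply, iotaR_smul]
  rw [L, R]
  exact Fmap_equivariant h2 g⁻¹ (fun y => v ((iotaL h2).symm y)) (iotaR h2 z)
end
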